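/- arXiv:2111.03900 — 2 statements merged into one kernel-verified Lean document; each statement's English description precedes it below -/
import Mathlib

section
/- Let x : ℝ₊ → ℝ₊ be locally absolutely continuous and satisfy x'(t) ≤ −η(t) x(t) for almost every t ≥ 0, where η : ℝ₊ → ℝ₊ is locally integrable and satisfies the persistence condition (1/τ)∫_t^{t+τ} η(s) ds ≥ μ for all t ≥ 0 and some τ > 0, μ ∈ (0,1]. Then x(t) ≤ x(0) e^{μτ} e^{−μt} for all t ≥ 0. -/
open MeasureTheory intervalIntegral

/-- **Exponential decay under a persistent dissipation rate.** Let `x : ℝ₊ → ℝ₊` be locally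
absolutely continuous (encoded: `x t = x 0 + ∫_0^t g`, with `g` locally integrable) and
satisfy `x' ≤ −η x` a.e. on `ℝ₊`, where `η ≥ 0` is locally integrable and persistent:
`(1/τ) ∫_t^{t+τ} η ≥ μ` for all `t ≥ 0`. Then `x t ≤ x 0 · e^{μτ} · e^{−μt}` for `t ≥ 0`. -/
theorem stmt11 (x g η : ℝ → ℝ) (τ μ : ℝ) (hτ : 0 < τ) (hμ : μ ∈ Set.Ioc (0 : ℝ) 1)
    (hxpos : ∀ t, 0 ≤ t → 0 ≤ x t)
    (hηpos : ∀ t, 0 ≤ η t)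
    (hηint : ∀ t, 0 ≤ t → IntervalIntegrable η volume 0 t)
    (hgint : ∀ t, 0 ≤ t → IntervalIntegrable g volume 0 t)
    (hx : ∀ t, 0 ≤ t → x t = x 0 + ∫ s in (0:ℝ)..t, g s)
    (hineq : ∀ᵐ t ∂volume, 0 ≤ t → g t ≤ -η t * x t)
    (hpers : ∀ t, 0 ≤ t → μ ≤ (1 / τ) * ∫ s in t..(t + τ), η s) :
    ∀ t, 0 ≤ t → x t ≤ x 0 * Real.exp (μ * τ) * Real.exp (-μ * t) := by
  obtain ⟨hμ0, hμ1⟩ := hμ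
  have hx0 : 0 ≤ x 0 := hxpos 0 le_rfl
  have hηii : ∀ a b : ℝ, 0 ≤ a → 0 ≤ b → IntervalIntegrable η volume a b :=
    fun a b ha hb => (hηint a ha).symm.trans (hηint b hb)
  have hgii : ∀ a b : ℝ, 0 ≤ a → 0 ≤ b → IntervalIntegrable g volume a b :=
    fun a b ha hb => (hgint a ha).symm.trans (hgint b hb)
  -- continuity of x on [a,b] ⊆ [0,∞)
  have hxcont : ∀ a b : ℝ, 0 ≤ a → a ≤ b → ContinuousOn x (Set.Icc a b) := by
    intro a b ha hab
    have hb : 0 ≤ b := ha.trans hab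
    have hsub : Set.Icc a b ⊆ Set.uIcc (0:ℝ) b := by
      rw [Set.uIcc_of_le hb]
      exact Set.Icc_subset_Icc ha le_rfl
    have hc : ContinuousOn (fun u => x 0 + ∫ s in (0:ℝ)..u, g s) (Set.uIcc (0:ℝ) b) :=
      continuousOn_const.add
        (intervalIntegral.continuousOn_primitive_interval' (hgint b hb) Set.left_mem_uIcc)
    exact (hc.mono hsub).congr fun u hu => hx u (ha.trans hu.1)
  -- interval integrability of η * x
  have hηxii : ∀ a b : ℝ, 0 ≤ a → a ≤ b → IntervalIntegrable (fun r => η r * x r) volume a b := by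
    intro a b ha hab
    have := (hηii a b ha (ha.trans hab)).mul_continuousOn
      (by rw [Set.uIcc_of_le hab]; exact hxcont a b ha hab)
    exact this
  have hnegii : ∀ a b : ℝ, 0 ≤ a → a ≤ b →
      IntervalIntegrable (fun r => -η r * x r) volume a b := by
    intro a b ha hab
    have := (hηxii a b ha hab).neg
    simp only [neg_mul]; exact this
  -- x u - x s = ∫ s..u g
  have hdiff : ∀ s u : ℝ, 0 ≤ s → 0 ≤ u → x u - x s = ∫ r in s..u, g r := by
    intro s u hs hu
    rw [hx u hu, hx s hs]
    have := integral_interval_sub_left (hgint u hu) (hgint s hs)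
    linarith [this]
  -- a.e. comparison of integrals
  have hineqI : ∀ s u : ℝ, 0 ≤ s → s ≤ u →
      (∫ r in s..u, g r) ≤ ∫ r in s..u, -η r * x r := by
    intro s u hs hsu
    have hu : 0 ≤ u := hs.trans hsu
    refine intervalIntegral.integral_mono_ae_restrict hsu (hgii s u hs hu) (hnegii s u hs hsu) ?_
    filter_upwards [ae_restrict_of_ae hineq, ae_restrict_mem measurableSet_Icc] with r hr hrmem
    exact hr (hs.trans hrmem.1)
  -- monotonicity of x on [0, ∞)
  have hmono : ∀ s u : ℝ, 0 ≤ s → s ≤ u → x u ≤ x s := by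
    intro s u hs hsu
    have hu : 0 ≤ u := hs.trans hsu
    have h1 := hdiff s u hs hu
    have h2 := hineqI s u hs hsu
    have h3 : (∫ r in s..u, -η r * x r) ≤ ∫ r in s..u, (0:ℝ) := by
      refine intervalIntegral.integral_mono_on hsu (hnegii s u hs hsu)
        intervalIntegrable_const ?_
      intro r hr
      have := mul_nonneg (hηpos r) (hxpos r (hs.trans hr.1))
      nlinarith
    simp only [intervalIntegral.integral_zero] at h3
    linarith
  -- the single-window inequality
  have hwindow : ∀ s u : ℝ, 0 ≤ s → s ≤ u →
      x u * (1 + ∫ r in s..u, η r) ≤ x s := by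
    intro s u hs hsu
    have hu : 0 ≤ u := hs.trans hsu
    have hI : 0 ≤ ∫ r in s..u, η r :=
      intervalIntegral.integral_nonneg hsu fun r _ => hηpos r
    have hlow : (∫ r in s..u, η r) * x u ≤ ∫ r in s..u, η r * x r := by
      have hmonoint := intervalIntegral.integral_mono_on hsu
        ((hηii s u hs hu).mul_const (x u)) (hηxii s u hs hsu)
        (fun r hr => mul_le_mul_of_nonneg_left (hmono r u (hs.trans hr.1) hr.2) (hηpos r))
      simpa [intervalIntegral.integral_mul_const] using hmonoint
    have hneg : (∫ r in s..u, -η r * x r) = -∫ r in s..u, η r * x r := by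
      simp [neg_mul]
    have h1 := hdiff s u hs hu
    have h2 := hineqI s u hs hsu
    rw [hneg] at h2
    nlinarith
  set E : ℝ → ℝ := fun t => ∫ s in (0:ℝ)..t, η s with hEdef
  have hEdiffI : ∀ s u : ℝ, 0 ≤ s → 0 ≤ u → E u - E s = ∫ r in s..u, η r := by
    intro s u hs hu
    exact integral_interval_sub_left (hηint u hu) (hηint s hs)
  have hEcont : ∀ t : ℝ, 0 ≤ t → ContinuousOn E (Set.Icc 0 t) := by
    intro t ht
    have := intervalIntegral.continuousOn_primitive_interval' (hηint t ht)
      (Set.left_mem_uIcc (a := (0:ℝ)) (b := t))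
    rwa [Set.uIcc_of_le ht] at this
  have hE0 : E 0 = 0 := intervalIntegral.integral_same
  -- key discrete Gronwall step
  have hkey : ∀ t : ℝ, 0 ≤ t → ∀ n : ℕ, 0 < n → x t * (1 + E t / n) ^ n ≤ x 0 := by
    intro t ht n hn
    have hnR : (0:ℝ) < n := Nat.cast_pos.mpr hn
    have hEt : 0 ≤ E t := intervalIntegral.integral_nonneg ht fun r _ => hηpos r
    have hd : 0 ≤ E t / n := div_nonneg hEt hnR.le
    have claim : ∀ k, k ≤ n → ∀ s, 0 ≤ s → s ≤ t →
        E s = ((n - k : ℕ) : ℝ) * (E t / n) → x t * (1 + E t / n) ^ k ≤ x s := by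
      intro k
      induction k with
      | zero =>
        intro _ s hs hst hEs
        have h0 : E s = E t := by
          rw [hEs]
          simp only [Nat.sub_zero]
          field_simp
        have hw := hwindow s t hs hst
        have hz : (∫ r in s..t, η r) = 0 := by
          rw [← hEdiffI s t hs ht, h0]; ring
        rw [hz] at hw
        simpa using hw
      | succ k ih =>
        intro hk s hs hst hEs
        have hk' : k ≤ n := Nat.le_of_succ_le hk
        have hcastsub : ((n - k : ℕ) : ℝ) = ((n - (k+1) : ℕ) : ℝ) + 1 := by
          have h : (n - (k+1)) + 1 = n - k := by omega
          rw [← h]; push_cast; ring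
        have hvmem : ((n - k : ℕ) : ℝ) * (E t / n) ∈ Set.Icc (E s) (E t) := by
          constructor
          · rw [hEs, hcastsub]; nlinarith
          · have hle : ((n - k : ℕ) : ℝ) ≤ (n : ℝ) := by exact_mod_cast Nat.sub_le n k
            calc ((n - k : ℕ) : ℝ) * (E t / n) ≤ (n : ℝ) * (E t / n) :=
                  mul_le_mul_of_nonneg_right hle hd
              _ = E t := by field_simp
        have hEcont' : ContinuousOn E (Set.Icc s t) :=
          (hEcont t ht).mono (Set.Icc_subset_Icc hs le_rfl)
        obtain ⟨u, humem, hEu⟩ := intermediate_value_Icc hst hEcont' hvmem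
        have hu0 : 0 ≤ u := hs.trans humem.1
        have hxu := ih hk' u hu0 humem.2 hEu
        have hwu := hwindow s u hs humem.1
        have hEus : (∫ r in s..u, η r) = E t / n := by
          rw [← hEdiffI s u hs hu0, hEu, hEs, hcastsub]; ring
        rw [hEus] at hwu
        calc x t * (1 + E t / n) ^ (k+1) = (x t * (1 + E t / n) ^ k) * (1 + E t / n) := by ring
          _ ≤ x u * (1 + E t / n) := mul_le_mul_of_nonneg_right hxu (by linarith)
          _ ≤ x s := hwu
    have h00 : E 0 = ((n - n : ℕ) : ℝ) * (E t / n) := by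
      simp [hE0]
    exact claim n le_rfl 0 le_rfl ht h00
  -- pass to the limit: Gronwall
  have hgron : ∀ t : ℝ, 0 ≤ t → x t * Real.exp (E t) ≤ x 0 := by
    intro t ht
    have hlim : Filter.Tendsto (fun n : ℕ => x t * (1 + E t / n) ^ n)
        Filter.atTop (nhds (x t * Real.exp (E t))) :=
      (Real.tendsto_one_add_div_pow_exp (E t)).const_mul (x t)
    refine le_of_tendsto hlim ?_
    filter_upwards [Filter.eventually_ge_atTop 1] with n hn
    exact hkey t ht n hn
  -- persistence lower bound on E at multiples of τ
  have hEfloor : ∀ m : ℕ, μ * ((m : ℝ) * τ) ≤ E ((m : ℝ) * τ) := by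
    intro m
    induction m with
    | zero => simp [hE0]
    | succ m ih =>
      have hm0 : 0 ≤ (m : ℝ) * τ := mul_nonneg m.cast_nonneg hτ.le
      have hp := hpers ((m : ℝ) * τ) hm0
      set I := ∫ s in ((m:ℝ)*τ)..((m:ℝ)*τ + τ), η s with hI
      have h2 : μ * τ ≤ (1 / τ * I) * τ := mul_le_mul_of_nonneg_right hp hτ.le
      have h3 : (1 / τ * I) * τ = I := by field_simp
      rw [h3] at h2
      have h4 : E ((m:ℝ)*τ + τ) - E ((m:ℝ)*τ) = I :=
        hEdiffI _ _ hm0 (by linarith)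
      have hcast : ((m+1 : ℕ) : ℝ) * τ = (m:ℝ)*τ + τ := by push_cast; ring
      rw [hcast]
      nlinarith
  intro t ht
  -- lower bound E t ≥ μ (t - τ)
  set k := ⌊t / τ⌋₊ with hkdef
  have hk1 : (k : ℝ) * τ ≤ t := by
    have := Nat.floor_le (div_nonneg ht hτ.le)
    calc (k : ℝ) * τ ≤ (t / τ) * τ := mul_le_mul_of_nonneg_right this hτ.le
      _ = t := by field_simp
  have hk2 : t - τ ≤ (k : ℝ) * τ := by
    have h := Nat.lt_floor_add_one (t / τ)
    have : t / τ * τ < ((k:ℝ) + 1) * τ := mul_lt_mul_of_pos_right h hτ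
    have ht' : t / τ * τ = t := by field_simp
    rw [ht'] at this
    nlinarith
  have hEmono : E ((k : ℝ) * τ) ≤ E t := by
    have h := hEdiffI ((k:ℝ)*τ) t (mul_nonneg k.cast_nonneg hτ.le) ht
    have hnn : 0 ≤ ∫ r in ((k:ℝ)*τ)..t, η r :=
      intervalIntegral.integral_nonneg hk1 fun r _ => hηpos r
    linarith
  have hEt : μ * (t - τ) ≤ E t := by
    have h1 := hEfloor k
    have h2 : μ * (t - τ) ≤ μ * ((k:ℝ) * τ) := mul_le_mul_of_nonneg_left hk2 hμ0.le
    linarith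
  -- conclude
  have hg := hgron t ht
  have hxle : x t ≤ x 0 * Real.exp (-(E t)) := by
    have hpos := Real.exp_pos (E t)
    rw [Real.exp_neg]
    have h2 : x t ≤ x 0 / Real.exp (E t) := (le_div_iff₀ hpos).2 hg
    rwa [div_eq_mul_inv] at h2
  have hexp : Real.exp (-(E t)) ≤ Real.exp (μ * τ + -μ * t) := by
    apply Real.exp_le_exp.2
    nlinarith
  calc x t ≤ x 0 * Real.exp (-(E t)) := hxle
    _ ≤ x 0 * Real.exp (μ * τ + -μ * t) := mul_le_mul_of_nonneg_left hexp hx0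
    _ = x 0 * Real.exp (μ * τ) * Real.exp (-μ * t) := by rw [Real.exp_add]; ring
end

section
/- Let (t_k)_{k≥0} be increasing with t_0 = 0 and t_{k+1} − t_k ≥ τ_d > 0, and let X : ℝ₊ → ℝ₊ satisfy the recursive decay X(t) ≤ (1/ν²) X(t_k) exp(−λ_k (t − t_k)) for t ∈ [t_k, t_{k+1}) with λ_k ≥ 0 and ν ∈ (0,1]. Suppose moreover Σ_{j<k} λ_j(t_{j+1}−t_j) + λ_k(t−t_k) ≥ μν²·t − C for some constants μ, C > 0 (persistence of the decay rates). Then X(t) ≤ K·X(0)·exp(−(μν² − (2/τ_d)log(1/ν))·t) for all t ≥ 0 and a constant K depending only on ν, μ, C, τ_d; in particular X(t) → 0 exponentially whenever (2/(μν²))log(1/ν) < τ_d. -/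
open Finset

/-- **Abstract switching-systems decay estimate.** Let `(t_k)` satisfy `t_0 = 0` and the
dwell-time condition `t_{k+1} − t_k ≥ τ_d > 0`, and let `X ≥ 0` satisfy the recursive decay
`X(s) ≤ ν⁻² X(t_k) exp(−λ_k(s − t_k))` on `[t_k, t_{k+1}]` with `λ_k ≥ 0`, `ν ∈ (0,1]`,
together with the persistence of the decay rates
`Σ_{j<k} λ_j(t_{j+1}−t_j) + λ_k(s−t_k) ≥ μν²·s − C`. Then
`X(s) ≤ K·X(0)·exp(−(μν² − (2/τ_d)log(1/ν))·s)` for all `s ≥ 0`, for a constant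
`K > 0` depending only on `ν, μ, C, τ_d`. -/
theorem stmt19 (τd ν μ C : ℝ) (hτd : 0 < τd) (hν : ν ∈ Set.Ioc (0 : ℝ) 1)
    (hμ : 0 < μ) (hC : 0 < C) :
    ∃ K : ℝ, 0 < K ∧
      ∀ (t : ℕ → ℝ) (X : ℝ → ℝ) (lam : ℕ → ℝ),
        t 0 = 0 →
        (∀ k, t k + τd ≤ t (k + 1)) →
        (∀ s, 0 ≤ X s) →
        (∀ k, 0 ≤ lam k) →
        (∀ k, ∀ s ∈ Set.Icc (t k) (t (k + 1)),
            X s ≤ (1 / ν ^ 2) * X (t k) * Real.exp (-(lam k) * (s - t k))) →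
        (∀ k, ∀ s ∈ Set.Icc (t k) (t (k + 1)),
            μ * ν ^ 2 * s - C ≤
              (∑ j ∈ Finset.range k, lam j * (t (j + 1) - t j)) + lam k * (s - t k)) →
        ∀ s, 0 ≤ s →
          X s ≤ K * X 0 * Real.exp (-(μ * ν ^ 2 - (2 / τd) * Real.log (1 / ν)) * s) := by

  obtain ⟨hν0, hν1⟩ := hν
  have hν2 : (0:ℝ) < ν ^ 2 := by positivity
  set ρ : ℝ := 1 / ν ^ 2 with hρdef
  have hρ0 : 0 < ρ := by positivity
  have hρ1 : 1 ≤ ρ := by rw [hρdef, le_div_iff₀ hν2]; nlinarith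
  have hlogρ : Real.log ρ = 2 * Real.log (1 / ν) := by
    rw [hρdef, one_div, one_div, Real.log_inv, Real.log_inv, Real.log_pow]
    push_cast; ring
  have hlogρ0 : 0 ≤ Real.log ρ := Real.log_nonneg hρ1
  refine ⟨ρ * Real.exp C, by positivity, ?_⟩
  intro t X lam ht0 hdwell hX hlam hdec hpers s hs
  have htk : ∀ k : ℕ, (k : ℝ) * τd ≤ t k := by
    intro k; induction k with
    | zero => simp [ht0]
    | succ n ih => have := hdwell n; push_cast; nlinarith
  have hstep : ∀ k, t k ≤ t (k+1) := fun k => by nlinarith [hdwell k]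
  have hXk : ∀ k, X (t k) ≤ ρ ^ k * X 0 *
      Real.exp (-(∑ j ∈ Finset.range k, lam j * (t (j+1) - t j))) := by
    intro k; induction k with
    | zero => simp [ht0]
    | succ n ih =>
      have h1 := hdec n (t (n+1)) ⟨hstep n, le_rfl⟩
      calc X (t (n+1)) ≤ ρ * X (t n) * Real.exp (-(lam n) * (t (n+1) - t n)) := h1
        _ ≤ ρ * (ρ ^ n * X 0 * Real.exp (-(∑ j ∈ Finset.range n, lam j * (t (j+1) - t j)))) * Real.exp (-(lam n) * (t (n+1) - t n)) := by
            gcongr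
        _ = ρ ^ (n+1) * X 0 * Real.exp (-(∑ j ∈ Finset.range (n+1), lam j * (t (j+1) - t j))) := by
            rw [Finset.sum_range_succ, neg_add, Real.exp_add, neg_mul]; ring
  have hex : ∃ k, s < t (k + 1) := by
    obtain ⟨n, hn⟩ := exists_nat_gt (s / τd)
    have h := htk (n+1)
    push_cast at h
    rw [div_lt_iff₀ hτd] at hn
    exact ⟨n, by nlinarith⟩
  obtain ⟨k, hk1, hk2⟩ : ∃ k, t k ≤ s ∧ s ≤ t (k+1) := by
    refine ⟨Nat.find hex, ?_, (Nat.find_spec hex).le⟩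
    rcases Nat.eq_zero_or_pos (Nat.find hex) with h0 | hpos
    · rw [h0, ht0]; exact hs
    · have hmin := Nat.find_min hex (Nat.sub_lt hpos one_pos)
      have h1 : Nat.find hex - 1 + 1 = Nat.find hex := Nat.succ_pred_eq_of_pos hpos
      rw [h1] at hmin
      exact not_lt.mp hmin
  have h1 := hdec k s ⟨hk1, hk2⟩
  have h2 := hpers k s ⟨hk1, hk2⟩
  have h3 := hXk k
  have hks : (k:ℝ) * τd ≤ s := le_trans (htk k) hk1
  have hbound : X s ≤ ρ ^ (k+1) * X 0 * Real.exp (C - μ * ν^2 * s) := by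
    calc X s ≤ ρ * X (t k) * Real.exp (-(lam k) * (s - t k)) := h1
      _ ≤ ρ * (ρ ^ k * X 0 * Real.exp (-(∑ j ∈ Finset.range k, lam j * (t (j+1) - t j)))) * Real.exp (-(lam k) * (s - t k)) := by
          gcongr
      _ = ρ ^ (k+1) * X 0 * Real.exp (-((∑ j ∈ Finset.range k, lam j * (t (j+1) - t j)) + lam k * (s - t k))) := by
          rw [neg_add, Real.exp_add, neg_mul]; ring
      _ ≤ ρ ^ (k+1) * X 0 * Real.exp (C - μ * ν^2 * s) := by
          exact mul_le_mul_of_nonneg_left (Real.exp_le_exp.mpr (by linarith))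
            (mul_nonneg (by positivity) (hX 0))
  have hpow : ρ ^ (k+1) ≤ ρ * Real.exp (Real.log ρ / τd * s) := by
    have e1 : ρ ^ (k+1) = Real.exp (((k:ℝ)+1) * Real.log ρ) := by
      rw [show ((k:ℝ)+1) = ((k+1 : ℕ) : ℝ) by push_cast; ring, Real.exp_nat_mul,
        Real.exp_log hρ0]
    rw [e1]
    have hk : (k:ℝ) ≤ s / τd := (le_div_iff₀ hτd).mpr hks
    have h4 : (k:ℝ) * Real.log ρ ≤ Real.log ρ / τd * s := by
      calc (k:ℝ) * Real.log ρ ≤ s / τd * Real.log ρ :=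
            mul_le_mul_of_nonneg_right hk hlogρ0
        _ = Real.log ρ / τd * s := by ring
    have : ((k:ℝ)+1) * Real.log ρ ≤ Real.log ρ + Real.log ρ / τd * s := by nlinarith
    calc Real.exp (((k:ℝ)+1) * Real.log ρ) ≤ Real.exp (Real.log ρ + Real.log ρ / τd * s) :=
          Real.exp_le_exp.mpr this
      _ = ρ * Real.exp (Real.log ρ / τd * s) := by rw [Real.exp_add, Real.exp_log hρ0]
  have e : Real.exp (Real.log ρ / τd * s) * Real.exp (C - μ * ν^2 * s)
      = Real.exp C * Real.exp (-(μ * ν ^ 2 - (2 / τd) * Real.log (1 / ν)) * s) := by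
    rw [← Real.exp_add, ← Real.exp_add]
    congr 1
    rw [hlogρ]; ring
  calc X s ≤ ρ ^ (k+1) * X 0 * Real.exp (C - μ * ν^2 * s) := hbound
    _ ≤ ρ * Real.exp (Real.log ρ / τd * s) * X 0 * Real.exp (C - μ * ν^2 * s) :=
        mul_le_mul_of_nonneg_right (mul_le_mul_of_nonneg_right hpow (hX 0)) (Real.exp_pos _).le
    _ = ρ * Real.exp C * X 0 * Real.exp (-(μ * ν ^ 2 - (2 / τd) * Real.log (1 / ν)) * s) := by
        rw [show ρ * Real.exp (Real.log ρ / τd * s) * X 0 * Real.exp (C - μ * ν^2 * s)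
          = ρ * (Real.exp (Real.log ρ / τd * s) * Real.exp (C - μ * ν^2 * s)) * X 0 from by ring, e]
        ring
end
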